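/- The map π' : ℍ² → ℝ ⊕ ℍ sending (z₁, z₂) to (|z₁|² − |z₂|², z₁·conj(z₂)) is surjective. -/
import Mathlib


open scoped Quaternion

/-- The map `π' : ℍ² → ℝ × ℍ`, `(z₁, z₂) ↦ (|z₁|² − |z₂|², z₁ ⬝ conj z₂)`, is
surjective. -/
theorem surjective_quaternion_pair_invariants :
    Function.Surjective (fun z : ℍ[ℝ] × ℍ[ℝ] =>
      ((‖z.1‖ ^ 2 - ‖z.2‖ ^ 2 : ℝ), z.1 * star z.2) : ℍ[ℝ] × ℍ[ℝ] → ℝ × ℍ[ℝ]) := by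
  rintro ⟨a, q⟩
  set D := Real.sqrt (a ^ 2 + 4 * ‖q‖ ^ 2) with hD
  have hDnn : 0 ≤ D := Real.sqrt_nonneg _
  have hD2 : D ^ 2 = a ^ 2 + 4 * ‖q‖ ^ 2 := Real.sq_sqrt (by positivity)
  set t := (D - a) / 2 with ht
  have htnn : 0 ≤ t := by
    have h1 : a ≤ D := by nlinarith [sq_nonneg (D - a), sq_nonneg (D + a), norm_nonneg q, sq_nonneg ‖q‖]
    linarith
  have hkey : t * (t + a) = ‖q‖ ^ 2 := by
    have := hD2
    ring_nf
    nlinarith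
  rcases eq_or_lt_of_le htnn with h0 | hpos
  · have hq2 : ‖q‖ ^ 2 = 0 := by nlinarith
    have hq : q = 0 := by
      have := pow_eq_zero_iff (n := 2) (by norm_num) |>.mp hq2
      simpa using this
    have ha : 0 ≤ a := by nlinarith
    refine ⟨((Real.sqrt a : ℝ) , (0 : ℍ[ℝ])), ?_⟩
    have : ‖((Real.sqrt a : ℝ) : ℍ[ℝ])‖ ^ 2 = a := by
      rw [Quaternion.norm_coe, Real.norm_eq_abs, abs_of_nonneg (Real.sqrt_nonneg a),
        Real.sq_sqrt ha]
    simp [hq, this, Real.sq_sqrt ha]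
  · set s := Real.sqrt t with hs
    have hs2 : s ^ 2 = t := Real.sq_sqrt htnn
    have hspos : 0 < s := Real.sqrt_pos.mpr hpos
    refine ⟨((((s⁻¹ : ℝ) : ℍ[ℝ]) * q), ((s : ℝ) : ℍ[ℝ])), ?_⟩
    have hq2 : (((s⁻¹:ℝ):ℍ[ℝ]) * q) * star ((s:ℝ):ℍ[ℝ]) = q := by
      rw [Quaternion.star_coe, mul_assoc, ← Quaternion.coe_commutes, ← mul_assoc,
        ← Quaternion.coe_mul, inv_mul_cancel₀ hspos.ne', Quaternion.coe_one, one_mul]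
    have hn : ‖(((s⁻¹:ℝ):ℍ[ℝ]) * q)‖ ^ 2 - ‖((s:ℝ):ℍ[ℝ])‖ ^ 2 = a := by
      rw [norm_mul, Quaternion.norm_coe, Quaternion.norm_coe, Real.norm_eq_abs,
        Real.norm_eq_abs, abs_of_nonneg (by positivity : (0:ℝ) ≤ s⁻¹),
        abs_of_nonneg hspos.le]
      have hsne : s ≠ 0 := hspos.ne'
      field_simp
      nlinarith
    exact Prod.ext hn hq2
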